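/- arXiv:2306.11152 — 3 statements merged into one kernel-verified Lean document; each statement's English description precedes it below -/
import Mathlib

section
/- Let W be a symmetric positive definite M×M real matrix and b ∈ ℝ^M a nonzero vector. Set d₁ = W⁻¹b and d₂ = W⁻¹b − ((bᵀW⁻²b)/(bᵀW⁻³b)) · W⁻²b, and assume d₂ ≠ 0. Then d₂ maximizes the Fisher criterion R(d) = (dᵀb)²/(dᵀW d) over all nonzero vectors d orthogonal to d₁: for every nonzero d ∈ ℝ^M with dᵀd₁ = 0, one has R(d) ≤ R(d₂). -/
open Matrix

/-- For symmetric positive definite `W` and nonzero `b`, with `d₁ = W⁻¹ b` and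
`d₂ = W⁻¹ b − ((bᵀ W⁻² b)/(bᵀ W⁻³ b)) W⁻² b ≠ 0`, the vector `d₂` maximizes the
Fisher criterion `R(d) = (dᵀ b)²/(dᵀ W d)` over all nonzero `d` orthogonal to `d₁`. -/
theorem second_discriminant_direction_maximizes {M : ℕ}
    (W : Matrix (Fin M) (Fin M) ℝ) (hW : W.PosDef)
    (b : Fin M → ℝ) (hb : b ≠ 0)
    (d₁ d₂ : Fin M → ℝ)
    (hd₁ : d₁ = W⁻¹ *ᵥ b)
    (hd₂ : d₂ = W⁻¹ *ᵥ b -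
      ((b ⬝ᵥ (W⁻¹ ^ 2 *ᵥ b)) / (b ⬝ᵥ (W⁻¹ ^ 3 *ᵥ b))) • (W⁻¹ ^ 2 *ᵥ b))
    (hd₂0 : d₂ ≠ 0) :
    ∀ d : Fin M → ℝ, d ≠ 0 → d ⬝ᵥ d₁ = 0 →
      (d ⬝ᵥ b) ^ 2 / (d ⬝ᵥ (W *ᵥ d)) ≤ (d₂ ⬝ᵥ b) ^ 2 / (d₂ ⬝ᵥ (W *ᵥ d₂)) := by
  intro d hd hdd₁
  have hWu : IsUnit W := hW.isUnit
  have hWinv : W * W⁻¹ = 1 := mul_nonsing_inv W (isUnit_iff_isUnit_det W |>.1 hWu)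
  set u : Fin M → ℝ := W⁻¹ *ᵥ b with hu
  set v : Fin M → ℝ := W⁻¹ ^ 2 *ᵥ b with hv
  have hWmu : W *ᵥ u = b := by
    rw [hu, mulVec_mulVec, hWinv, one_mulVec]
  have hWmv : W *ᵥ v = u := by
    rw [hv, mulVec_mulVec, pow_two, ← mul_assoc, hWinv, one_mul]
  have hq : ∀ x : Fin M → ℝ, x ≠ 0 → 0 < x ⬝ᵥ (W *ᵥ x) := by
    intro x hx
    simpa using hW.dotProduct_mulVec_pos hx
  have hWt : Wᵀ = W := by
    have := hW.isHermitian
    simpa [Matrix.IsHermitian, conjTranspose_eq_transpose_of_trivial] using this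
  have hsym : ∀ x y : Fin M → ℝ, x ⬝ᵥ (W *ᵥ y) = y ⬝ᵥ (W *ᵥ x) := by
    intro x y
    rw [dotProduct_mulVec, dotProduct_comm, ← mulVec_transpose, hWt]
  have hWit : W⁻¹ᵀ = W⁻¹ := by
    rw [transpose_nonsing_inv, hWt]
  set α : ℝ := b ⬝ᵥ v with hα
  set β : ℝ := b ⬝ᵥ (W⁻¹ ^ 3 *ᵥ b) with hβ
  set c : ℝ := α / β with hc
  have huu : u ⬝ᵥ u = α := by
    conv_lhs => rw [hu, dotProduct_mulVec, ← mulVec_transpose, hWit]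
    rw [mulVec_mulVec, ← pow_two, ← hv, dotProduct_comm, ← hα]
  have hβuv : β = u ⬝ᵥ v := by
    have h3 : W⁻¹ ^ 3 *ᵥ b = W⁻¹ *ᵥ v := by
      rw [hv, mulVec_mulVec, ← pow_succ']
    rw [hβ, h3, dotProduct_mulVec, ← mulVec_transpose, hWit, ← hu]
  have hvne : v ≠ 0 := by
    intro h
    apply hb
    rw [← hWmu, ← hWmv, h, mulVec_zero, mulVec_zero]
  have hβpos : 0 < β := by
    have : v ⬝ᵥ (W *ᵥ v) = β := by rw [hWmv, dotProduct_comm, hβuv]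
    rw [← this]; exact hq v hvne
  have hWd₂ : W *ᵥ d₂ = b - c • u := by
    rw [hd₂, mulVec_sub, mulVec_smul, hWmu, hWmv]
  have hd₂b : d₂ ⬝ᵥ b = u ⬝ᵥ b - c * α := by
    rw [hd₂, sub_dotProduct, smul_dotProduct, smul_eq_mul, dotProduct_comm v b, ← hα]
  have hq22 : d₂ ⬝ᵥ (W *ᵥ d₂) = d₂ ⬝ᵥ b := by
    rw [hWd₂, hd₂]
    simp only [sub_dotProduct, dotProduct_sub, smul_dotProduct, dotProduct_smul,
      smul_eq_mul]
    rw [huu]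
    have h2 : v ⬝ᵥ u = β := by rw [dotProduct_comm, ← hβuv]
    have h3 : v ⬝ᵥ b = α := by rw [dotProduct_comm, ← hα]
    have h4 : c * β = α := by rw [hc]; field_simp
    rw [h2, h3]
    have h5 : α - c * β = 0 := by linarith
    rw [h5, mul_zero, sub_zero]
  have hdu : d ⬝ᵥ u = 0 := by rw [← hd₁]; exact hdd₁
  have hqd2 : d ⬝ᵥ (W *ᵥ d₂) = d ⬝ᵥ b := by
    rw [hWd₂, dotProduct_sub, dotProduct_smul, hdu, smul_eq_mul, mul_zero, sub_zero]
  have hqdd : 0 < d ⬝ᵥ (W *ᵥ d) := hq d hd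
  have hq22pos : 0 < d₂ ⬝ᵥ (W *ᵥ d₂) := hq d₂ hd₂0
  have hCS : (d ⬝ᵥ (W *ᵥ d₂)) ^ 2 ≤ (d ⬝ᵥ (W *ᵥ d)) * (d₂ ⬝ᵥ (W *ᵥ d₂)) := by
    set q11 := d ⬝ᵥ (W *ᵥ d) with hq11d
    set q22 := d₂ ⬝ᵥ (W *ᵥ d₂) with hq22d
    set q12 := d ⬝ᵥ (W *ᵥ d₂) with hq12d
    have hx : 0 ≤ (q22 • d - q12 • d₂) ⬝ᵥ (W *ᵥ (q22 • d - q12 • d₂)) := by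
      by_cases h : q22 • d - q12 • d₂ = 0
      · rw [h]; simp
      · exact (hq _ h).le
    have hexp : (q22 • d - q12 • d₂) ⬝ᵥ (W *ᵥ (q22 • d - q12 • d₂)) =
        q22 * (q22 * q11 - q12 * q12) := by
      rw [mulVec_sub, mulVec_smul, mulVec_smul, sub_dotProduct, smul_dotProduct,
        smul_dotProduct, dotProduct_sub, dotProduct_sub, dotProduct_smul,
        dotProduct_smul, dotProduct_smul, dotProduct_smul]
      have h1 : d₂ ⬝ᵥ (W *ᵥ d) = q12 := by rw [hq12d]; exact hsym d₂ d
      rw [h1, ← hq11d, ← hq12d, ← hq22d]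
      simp only [smul_eq_mul]
      ring
    rw [hexp] at hx
    nlinarith [hq22pos, hx]
  rw [hqd2] at hCS
  rw [div_le_div_iff₀ hqdd hq22pos, ← hq22]
  nlinarith [hCS, hq22pos]
end

section
/- Let Y ∈ ℝ^{N×M} have entrywise nonnegative entries, and let K ∈ ℝ^{N×p} and X ∈ ℝ^{p×M} have entrywise strictly positive entries. Define the multiplicatively updated matrix X′ entrywise by X′_{aj} = X_{aj} · (KᵀY)_{aj} / (KᵀK X)_{aj} (all denominators are strictly positive). Then the Frobenius reconstruction objective does not increase: ‖Y − K X′‖_F² ≤ ‖Y − K X‖_F². -/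
open Matrix Finset

lemma nmf_col {N p : ℕ} (y : Fin N → ℝ)
    (K : Fin N → Fin p → ℝ) (hK : ∀ i a, 0 ≤ K i a)
    (x : Fin p → ℝ) (hx : ∀ a, 0 < x a)
    (hden : ∀ a, 0 < ∑ b, (∑ i, K i a * K i b) * x b)
    (x' : Fin p → ℝ)
    (hx' : ∀ a, x' a = x a * (∑ i, K i a * y i) / (∑ b, (∑ i, K i a * K i b) * x b)) :
    ∑ i, (y i - ∑ a, K i a * x' a) ^ 2 ≤ ∑ i, (y i - ∑ a, K i a * x a) ^ 2 := by
  classical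
  set A : Fin p → Fin p → ℝ := fun a b => ∑ i, K i a * K i b with hA
  set Ax : Fin p → ℝ := fun a => ∑ b, A a b * x b with hAx
  set bb : Fin p → ℝ := fun a => ∑ i, K i a * y i with hbb
  set d : Fin p → ℝ := fun a => x' a - x a with hd
  have hAnn : ∀ a b, 0 ≤ A a b := fun a b =>
    Finset.sum_nonneg fun i _ => mul_nonneg (hK i a) (hK i b)
  have hAsym : ∀ a b, A a b = A b a := fun a b => by
    simp only [hA]; exact Finset.sum_congr rfl fun i _ => mul_comm _ _
  have hAxpos : ∀ a, 0 < Ax a := hden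
  have hxne : ∀ a, x a ≠ 0 := fun a => (hx a).ne'
  have hAxne : ∀ a, Ax a ≠ 0 := fun a => (hAxpos a).ne'
  have hx'2 : ∀ a, x' a = x a * bb a / Ax a := hx'
  -- relation: bb a - Ax a = d a * Ax a / x a
  have hrel : ∀ a, bb a - Ax a = d a * Ax a / x a := by
    intro a
    have ha := hxne a
    have hb := hAxne a
    rw [hd]
    simp only
    rw [hx'2 a]
    field_simp
  have h1 : ∀ i, (∑ a, K i a * x' a) = (∑ a, K i a * x a) + (∑ a, K i a * d a) := by
    intro i
    rw [← Finset.sum_add_distrib]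
    refine Finset.sum_congr rfl fun a _ => ?_
    rw [hd]; simp only; ring
  have hcross : ∑ i, (y i - ∑ a, K i a * x a) * (∑ a, K i a * d a)
      = ∑ a, d a * (bb a - Ax a) := by
    calc ∑ i, (y i - ∑ a, K i a * x a) * (∑ a, K i a * d a)
        = ∑ i, ∑ a, (y i - ∑ b, K i b * x b) * (K i a * d a) := by
          exact Finset.sum_congr rfl fun i _ => Finset.mul_sum _ _ _
      _ = ∑ a, ∑ i, (y i - ∑ b, K i b * x b) * (K i a * d a) := Finset.sum_comm
      _ = ∑ a, d a * (bb a - Ax a) := by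
          refine Finset.sum_congr rfl fun a _ => ?_
          have e2 : ∑ i, K i a * ∑ b, K i b * x b = Ax a := by
            calc ∑ i, K i a * ∑ b, K i b * x b
                = ∑ i, ∑ b, K i a * (K i b * x b) := by
                  exact Finset.sum_congr rfl fun i _ => Finset.mul_sum _ _ _
              _ = ∑ b, ∑ i, K i a * (K i b * x b) := Finset.sum_comm
              _ = ∑ b, A a b * x b := by
                  refine Finset.sum_congr rfl fun b _ => ?_
                  rw [hA]; simp only
                  rw [Finset.sum_mul]
                  exact Finset.sum_congr rfl fun i _ => by ring
          have e1 : d a * (bb a - Ax a)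
              = ∑ i, (y i - ∑ b, K i b * x b) * (K i a * d a) := by
            rw [hbb]
            simp only
            rw [← e2, mul_sub, Finset.mul_sum, Finset.mul_sum, ← Finset.sum_sub_distrib]
            exact Finset.sum_congr rfl fun i _ => by ring
          exact e1.symm
  have hquad : ∑ i, (∑ a, K i a * d a) ^ 2 = ∑ a, ∑ b, A a b * d a * d b := by
    calc ∑ i, (∑ a, K i a * d a) ^ 2
        = ∑ i, ∑ a, ∑ b, (K i a * d a) * (K i b * d b) := by
          refine Finset.sum_congr rfl fun i _ => ?_
          rw [sq, Finset.sum_mul_sum]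
      _ = ∑ a, ∑ i, ∑ b, (K i a * d a) * (K i b * d b) := Finset.sum_comm
      _ = ∑ a, ∑ b, ∑ i, (K i a * d a) * (K i b * d b) := by
          exact Finset.sum_congr rfl fun a _ => Finset.sum_comm
      _ = ∑ a, ∑ b, A a b * d a * d b := by
          refine Finset.sum_congr rfl fun a _ => Finset.sum_congr rfl fun b _ => ?_
          rw [hA]; simp only
          rw [Finset.sum_mul, Finset.sum_mul]
          exact Finset.sum_congr rfl fun i _ => by ring
  have expand : ∑ i, (y i - ∑ a, K i a * x' a) ^ 2
      = ∑ i, (y i - ∑ a, K i a * x a) ^ 2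
        - 2 * ∑ a, d a * (bb a - Ax a)
        + ∑ a, ∑ b, A a b * d a * d b := by
    rw [← hcross, ← hquad, Finset.mul_sum, ← Finset.sum_sub_distrib,
      ← Finset.sum_add_distrib]
    refine Finset.sum_congr rfl fun i _ => ?_
    rw [h1 i]
    ring
  have hT1 : ∑ a, d a * (bb a - Ax a) = ∑ a, d a ^ 2 * Ax a / x a := by
    refine Finset.sum_congr rfl fun a _ => ?_
    rw [hrel a]
    have ha := hxne a
    field_simp
  have hT1nn : 0 ≤ ∑ a, d a ^ 2 * Ax a / x a :=
    Finset.sum_nonneg fun a _ =>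
      div_nonneg (mul_nonneg (sq_nonneg _) (hAxpos a).le) (hx a).le
  have hdom : ∑ a, ∑ b, A a b * d a * d b ≤ ∑ a, d a ^ 2 * Ax a / x a := by
    have hexp : ∀ a, d a ^ 2 * Ax a / x a = ∑ b, A a b * x b * d a ^ 2 / x a := by
      intro a
      rw [hAx]
      simp only
      rw [Finset.mul_sum, Finset.sum_div]
      exact Finset.sum_congr rfl fun b _ => by ring
    set g : Fin p → Fin p → ℝ :=
      fun a b => A a b * x b * d a ^ 2 / x a - A a b * d a * d b with hg
    have hsymsum : ∑ a, ∑ b, g a b = ∑ a, ∑ b, g b a := Finset.sum_comm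
    have hpair : ∀ a b, 0 ≤ g a b + g b a := by
      intro a b
      have ha := hxne a
      have hb := hxne b
      have hid : g a b + g b a
          = A a b * ((x b * d a - x a * d b) ^ 2 / (x a * x b)) := by
        rw [hg]
        simp only
        rw [hAsym b a]
        field_simp
        ring
      rw [hid]
      exact mul_nonneg (hAnn a b)
        (div_nonneg (sq_nonneg _) (mul_nonneg (hx a).le (hx b).le))
    have h2 : 0 ≤ ∑ a, ∑ b, (g a b + g b a) :=
      Finset.sum_nonneg fun a _ => Finset.sum_nonneg fun b _ => hpair a b
    have h3 : ∑ a, ∑ b, (g a b + g b a) = ∑ a, ∑ b, g a b + ∑ a, ∑ b, g b a := by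
      rw [← Finset.sum_add_distrib]
      exact Finset.sum_congr rfl fun a _ => Finset.sum_add_distrib
    have hkey : 0 ≤ ∑ a, ∑ b, g a b := by
      rw [h3, ← hsymsum] at h2
      linarith
    have hsplit : ∑ a, ∑ b, g a b
        = ∑ a, ∑ b, A a b * x b * d a ^ 2 / x a - ∑ a, ∑ b, A a b * d a * d b := by
      rw [← Finset.sum_sub_distrib]
      exact Finset.sum_congr rfl fun a _ => Finset.sum_sub_distrib _ _
    have hfin : ∑ a, ∑ b, A a b * d a * d b ≤ ∑ a, ∑ b, A a b * x b * d a ^ 2 / x a := by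
      rw [hsplit] at hkey
      linarith
    calc ∑ a, ∑ b, A a b * d a * d b
        ≤ ∑ a, ∑ b, A a b * x b * d a ^ 2 / x a := hfin
      _ = ∑ a, d a ^ 2 * Ax a / x a :=
          Finset.sum_congr rfl fun a _ => (hexp a).symm
  rw [expand, hT1]
  linarith

/-- Lee–Seung multiplicative update for `X` in NMF: if `Y` is entrywise nonnegative and
`K`, `X` are entrywise strictly positive with all denominators `(KᵀK X)_{aj}` strictly
positive, then the update `X′_{aj} = X_{aj} (KᵀY)_{aj} / (KᵀK X)_{aj}` does not increase
the Frobenius reconstruction objective `‖Y − K X‖_F²`. -/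
theorem nmf_update_X_decreases {N M p : ℕ}
    (Y : Matrix (Fin N) (Fin M) ℝ) (hY : ∀ i j, 0 ≤ Y i j)
    (K : Matrix (Fin N) (Fin p) ℝ) (hK : ∀ i a, 0 < K i a)
    (X : Matrix (Fin p) (Fin M) ℝ) (hX : ∀ a j, 0 < X a j)
    (hden : ∀ a j, 0 < (Kᵀ * K * X) a j)
    (X' : Matrix (Fin p) (Fin M) ℝ)
    (hX' : ∀ a j, X' a j = X a j * (Kᵀ * Y) a j / (Kᵀ * K * X) a j) :
    ∑ i, ∑ j, (Y i j - (K * X') i j) ^ 2 ≤ ∑ i, ∑ j, (Y i j - (K * X) i j) ^ 2 := by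
  have hden' : ∀ a j, (Kᵀ * K * X) a j = ∑ b, (∑ i, K i a * K i b) * X b j := by
    intro a j
    simp [Matrix.mul_apply]
  have hKY : ∀ a j, (Kᵀ * Y) a j = ∑ i, K i a * Y i j := by
    intro a j
    simp [Matrix.mul_apply]
  rw [Finset.sum_comm (f := fun i j => (Y i j - (K * X') i j) ^ 2),
    Finset.sum_comm (f := fun i j => (Y i j - (K * X) i j) ^ 2)]
  refine Finset.sum_le_sum fun j _ => ?_
  have := nmf_col (fun i => Y i j) (fun i a => K i a) (fun i a => (hK i a).le)
    (fun a => X a j) (fun a => hX a j)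
    (fun a => by rw [← hden' a j]; exact hden a j)
    (fun a => X' a j)
    (fun a => by
      show X' a j = X a j * (∑ i, K i a * Y i j) / (∑ b, (∑ i, K i a * K i b) * X b j)
      rw [hX' a j, hKY a j, hden' a j])
  simpa [Matrix.mul_apply] using this
end

section
/- Let Y ∈ ℝ^{N×M} have entrywise nonnegative entries, and let K ∈ ℝ^{N×p} and X ∈ ℝ^{p×M} have entrywise strictly positive entries. Define the multiplicatively updated matrix K′ entrywise by K′_{ia} = K_{ia} · (Y Xᵀ)_{ia} / (K X Xᵀ)_{ia} (all denominators are strictly positive). Then the Frobenius reconstruction objective does not increase: ‖Y − K′ X‖_F² ≤ ‖Y − K X‖_F². -/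
open Matrix

private lemma amgm_weighted (x y ka kb : ℝ) (hka : 0 < ka) (hkb : 0 < kb) :
    x * y ≤ (x ^ 2 * kb / ka + y ^ 2 * ka / kb) / 2 := by
  rw [div_add_div _ _ hka.ne' hkb.ne', div_div, le_div_iff₀ (by positivity)]
  nlinarith [sq_nonneg (x * kb - y * ka)]

private lemma quad_majorize {p : ℕ} (G : Fin p → Fin p → ℝ)
    (hGsym : ∀ a b, G a b = G b a) (hG : ∀ a b, 0 ≤ G a b)
    (k : Fin p → ℝ) (hk : ∀ a, 0 < k a) (v : Fin p → ℝ) :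
    ∑ a, ∑ b, v a * G a b * v b ≤ ∑ a, v a ^ 2 * (∑ b, G a b * k b) / k a := by
  have step1 : ∑ a, ∑ b, v a * G a b * v b
      ≤ ∑ a, ∑ b, (G a b * (v a ^ 2 * k b / k a) + G a b * (v b ^ 2 * k a / k b)) / 2 := by
    refine Finset.sum_le_sum fun a _ => Finset.sum_le_sum fun b _ => ?_
    have h := amgm_weighted (v a) (v b) (k a) (k b) (hk a) (hk b)
    calc v a * G a b * v b = G a b * (v a * v b) := by ring
      _ ≤ G a b * ((v a ^ 2 * k b / k a + v b ^ 2 * k a / k b) / 2) :=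
          mul_le_mul_of_nonneg_left h (hG a b)
      _ = (G a b * (v a ^ 2 * k b / k a) + G a b * (v b ^ 2 * k a / k b)) / 2 := by ring
  have sym : ∑ a, ∑ b, G a b * (v b ^ 2 * k a / k b)
      = ∑ a, ∑ b, G a b * (v a ^ 2 * k b / k a) := by
    rw [Finset.sum_comm]
    exact Finset.sum_congr rfl fun a _ => Finset.sum_congr rfl fun b _ => by rw [hGsym]
  refine step1.trans_eq ?_
  calc ∑ a, ∑ b, (G a b * (v a ^ 2 * k b / k a) + G a b * (v b ^ 2 * k a / k b)) / 2
      = (∑ a, ∑ b, G a b * (v a ^ 2 * k b / k a)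
        + ∑ a, ∑ b, G a b * (v b ^ 2 * k a / k b)) / 2 := by
        simp only [add_div, Finset.sum_add_distrib, Finset.sum_div]
    _ = ∑ a, ∑ b, G a b * (v a ^ 2 * k b / k a) := by rw [sym]; ring
    _ = ∑ a, v a ^ 2 * (∑ b, G a b * k b) / k a := by
        refine Finset.sum_congr rfl fun a _ => ?_
        rw [Finset.mul_sum, Finset.sum_div]
        exact Finset.sum_congr rfl fun b _ => by ring

private lemma row_decrease {p M : ℕ} (y : Fin M → ℝ)
    (X : Matrix (Fin p) (Fin M) ℝ) (hX : ∀ a j, 0 < X a j)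
    (k : Fin p → ℝ) (hk : ∀ a, 0 < k a)
    (b d : Fin p → ℝ)
    (hb : ∀ a, b a = ∑ j, y j * X a j)
    (hd : ∀ a, d a = ∑ c, k c * ∑ j, X c j * X a j) (hdpos : ∀ a, 0 < d a)
    (k' : Fin p → ℝ) (hk' : ∀ a, k' a = k a * b a / d a) :
    ∑ j, (y j - ∑ a, k' a * X a j) ^ 2 ≤ ∑ j, (y j - ∑ a, k a * X a j) ^ 2 := by
  classical
  set G : Fin p → Fin p → ℝ := fun a c => ∑ j, X a j * X c j with hGdef
  have hGsym : ∀ a c, G a c = G c a := by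
    intro a c
    show (∑ j, X a j * X c j) = ∑ j, X c j * X a j
    exact Finset.sum_congr rfl fun j _ => mul_comm _ _
  have hGnn : ∀ a c, 0 ≤ G a c := fun a c =>
    Finset.sum_nonneg fun j _ => mul_nonneg (hX a j).le (hX c j).le
  have hd' : ∀ a, d a = ∑ c, G a c * k c := by
    intro a; rw [hd]
    refine Finset.sum_congr rfl fun c _ => ?_
    rw [hGsym a c]; exact mul_comm _ _
  set δ : Fin p → ℝ := fun a => k' a - k a with hδdef
  set t : Fin M → ℝ := fun j => ∑ a, δ a * X a j with htdef
  have hsplit : ∀ j, y j - ∑ a, k' a * X a j = (y j - ∑ a, k a * X a j) - t j := by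
    intro j
    simp only [htdef, hδdef, sub_mul, Finset.sum_sub_distrib]
    ring
  -- t·y
  have hty : ∑ j, t j * y j = ∑ a, δ a * b a := by
    simp only [htdef, Finset.sum_mul]
    rw [Finset.sum_comm]
    refine Finset.sum_congr rfl fun a _ => ?_
    rw [hb, Finset.mul_sum]
    exact Finset.sum_congr rfl fun j _ => by ring
  -- t·s
  have hts : ∑ j, t j * (∑ a, k a * X a j) = ∑ a, δ a * d a := by
    simp only [htdef]
    calc ∑ j, (∑ a, δ a * X a j) * (∑ c, k c * X c j)
        = ∑ j, ∑ a, ∑ c, (δ a * X a j) * (k c * X c j) := by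
          exact Finset.sum_congr rfl fun j _ => by rw [Finset.sum_mul_sum]
      _ = ∑ a, ∑ c, ∑ j, (δ a * X a j) * (k c * X c j) := by
          rw [Finset.sum_comm]
          exact Finset.sum_congr rfl fun a _ => Finset.sum_comm
      _ = ∑ a, δ a * d a := by
          refine Finset.sum_congr rfl fun a _ => ?_
          rw [hd' a, Finset.mul_sum]
          refine Finset.sum_congr rfl fun c _ => ?_
          show ∑ j, (δ a * X a j) * (k c * X c j) = δ a * ((∑ j, X a j * X c j) * k c)
          simp only [Finset.sum_mul, Finset.mul_sum]
          exact Finset.sum_congr rfl fun j _ => by ring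
  -- t²
  have htt : ∑ j, t j ^ 2 = ∑ a, ∑ c, δ a * G a c * δ c := by
    simp only [htdef, sq]
    calc ∑ j, (∑ a, δ a * X a j) * (∑ c, δ c * X c j)
        = ∑ j, ∑ a, ∑ c, (δ a * X a j) * (δ c * X c j) := by
          exact Finset.sum_congr rfl fun j _ => by rw [Finset.sum_mul_sum]
      _ = ∑ a, ∑ c, ∑ j, (δ a * X a j) * (δ c * X c j) := by
          rw [Finset.sum_comm]
          exact Finset.sum_congr rfl fun a _ => Finset.sum_comm
      _ = ∑ a, ∑ c, δ a * G a c * δ c := by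
          refine Finset.sum_congr rfl fun a _ => Finset.sum_congr rfl fun c _ => ?_
          show ∑ j, (δ a * X a j) * (δ c * X c j) = δ a * (∑ j, X a j * X c j) * δ c
          simp only [Finset.sum_mul, Finset.mul_sum]
          exact Finset.sum_congr rfl fun j _ => by ring
  -- objective expansion
  have hexp : ∑ j, (y j - ∑ a, k' a * X a j) ^ 2
      = ∑ j, (y j - ∑ a, k a * X a j) ^ 2
        - 2 * ∑ j, t j * (y j - ∑ a, k a * X a j) + ∑ j, t j ^ 2 := by
    rw [Finset.mul_sum, ← Finset.sum_sub_distrib, ← Finset.sum_add_distrib]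
    refine Finset.sum_congr rfl fun j _ => ?_
    rw [hsplit j]; ring
  rw [hexp]
  have hte : ∑ j, t j * (y j - ∑ a, k a * X a j) = ∑ a, δ a * b a - ∑ a, δ a * d a := by
    rw [← hty, ← hts, ← Finset.sum_sub_distrib]
    exact Finset.sum_congr rfl fun j _ => by ring
  rw [hte]
  have hQ : ∑ j, t j ^ 2 ≤ ∑ a, δ a ^ 2 * d a / k a := by
    rw [htt]
    have := quad_majorize G hGsym hGnn k hk δ
    refine this.trans_eq ?_
    exact Finset.sum_congr rfl fun a _ => by rw [← hd' a]
  have hfinal : ∑ a, δ a ^ 2 * d a / k a - 2 * (∑ a, δ a * b a - ∑ a, δ a * d a) ≤ 0 := by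
    have : ∑ a, δ a ^ 2 * d a / k a - 2 * (∑ a, δ a * b a - ∑ a, δ a * d a)
        = ∑ a, (δ a ^ 2 * d a / k a - 2 * (δ a * b a - δ a * d a)) := by
      rw [Finset.sum_sub_distrib, ← Finset.sum_sub_distrib, Finset.mul_sum]
    rw [this]
    refine Finset.sum_nonpos fun a _ => ?_
    have hda : d a ≠ 0 := (hdpos a).ne'
    have hka : k a ≠ 0 := (hk a).ne'
    have hδa : δ a = k a * (b a - d a) / d a := by
      simp only [hδdef, hk' a]
      field_simp
    rw [hδa]
    have hterm : (k a * (b a - d a) / d a) ^ 2 * d a / k a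
        - 2 * (k a * (b a - d a) / d a * b a - k a * (b a - d a) / d a * d a)
        = -(k a * (b a - d a) ^ 2 / d a) := by
      field_simp
      ring
    rw [hterm]
    have : 0 ≤ k a * (b a - d a) ^ 2 / d a :=
      div_nonneg (mul_nonneg (hk a).le (sq_nonneg _)) (hdpos a).le
    linarith
  linarith [hQ, hfinal]

/-- Lee–Seung multiplicative update for `K` in NMF: if `Y` is entrywise nonnegative and
`K`, `X` are entrywise strictly positive with all denominators `(K X Xᵀ)_{ia}` strictly
positive, then the update `K′_{ia} = K_{ia} (Y Xᵀ)_{ia} / (K X Xᵀ)_{ia}` does not increase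
the Frobenius reconstruction objective `‖Y − K X‖_F²`. -/
theorem nmf_update_K_decreases {N M p : ℕ}
    (Y : Matrix (Fin N) (Fin M) ℝ) (hY : ∀ i j, 0 ≤ Y i j)
    (K : Matrix (Fin N) (Fin p) ℝ) (hK : ∀ i a, 0 < K i a)
    (X : Matrix (Fin p) (Fin M) ℝ) (hX : ∀ a j, 0 < X a j)
    (hden : ∀ i a, 0 < (K * X * Xᵀ) i a)
    (K' : Matrix (Fin N) (Fin p) ℝ)
    (hK' : ∀ i a, K' i a = K i a * (Y * Xᵀ) i a / (K * X * Xᵀ) i a) :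
    ∑ i, ∑ j, (Y i j - (K' * X) i j) ^ 2 ≤ ∑ i, ∑ j, (Y i j - (K * X) i j) ^ 2 := by
  refine Finset.sum_le_sum fun i _ => ?_
  have hKX : ∀ j, (K * X) i j = ∑ a, K i a * X a j := fun j => by
    simp [Matrix.mul_apply]
  have hK'X : ∀ j, (K' * X) i j = ∑ a, K' i a * X a j := fun j => by
    simp [Matrix.mul_apply]
  have hb : ∀ a, (Y * Xᵀ) i a = ∑ j, Y i j * X a j := fun a => by
    simp [Matrix.mul_apply, Matrix.transpose_apply]
  have hd : ∀ a, (K * X * Xᵀ) i a = ∑ c, K i c * ∑ j, X c j * X a j := fun a => by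
    rw [Matrix.mul_assoc]
    simp [Matrix.mul_apply, Matrix.transpose_apply, Finset.mul_sum]
  simp only [hKX, hK'X]
  exact row_decrease (Y i) X hX (K i) (hK i)
    (fun a => (Y * Xᵀ) i a) (fun a => (K * X * Xᵀ) i a) hb hd (hden i)
    (K' i) (hK' i)
end
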